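/- arXiv:2202.06110 — 5 statements merged into one kernel-verified Lean document; each statement's English description precedes it below -/
import Mathlib

section
/- Darboux's lemma: Let q : ℝ → ℝ be continuous, λ ≠ μ real numbers. If f satisfies -f'' + q·f = λ·f, g satisfies -g'' + q·g = μ·g, and g(x) ≠ 0 on an interval I, then the function h = (g·f' - g'·f)/g satisfies -h'' + (q - 2·(log g)'')·h = λ·h on I. -/
/-- Darboux's lemma: if `-f'' + q f = λ f`, `-g'' + q g = μ g` with `λ ≠ μ`, and `g` is
nonvanishing on an open interval `I`, then `h = (g f' - g' f)/g` satisfies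
`-h'' + (q - 2 (log g)'') h = λ h` on `I`. -/
theorem darboux_lemma (q f g : ℝ → ℝ) (lam mu : ℝ) (I : Set ℝ) (hI : IsOpen I)
    (hq : Continuous q) (hf : ContDiff ℝ 2 f) (hg : ContDiff ℝ 2 g)
    (hlm : lam ≠ mu)
    (hfe : ∀ x, -(deriv (deriv f) x) + q x * f x = lam * f x)
    (hge : ∀ x, -(deriv (deriv g) x) + q x * g x = mu * g x)
    (hg0 : ∀ x ∈ I, g x ≠ 0) :
    ∀ x ∈ I,
      -(deriv (deriv (fun y => (g y * deriv f y - deriv g y * f y) / g y)) x)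
        + (q x - 2 * deriv (deriv (fun y => Real.log (g y))) x)
          * ((g x * deriv f x - deriv g x * f x) / g x)
      = lam * ((g x * deriv f x - deriv g x * f x) / g x) := by
  intro x hx
  have hf1 : Differentiable ℝ f := hf.differentiable (by norm_num)
  have hg1 : Differentiable ℝ g := hg.differentiable (by norm_num)
  have hf2 : Differentiable ℝ (deriv f) := by
    have : ContDiff ℝ ((1 : ℕ) + 1) f := by exact_mod_cast hf
    exact (contDiff_succ_iff_deriv.mp this).2.2.differentiable (by norm_num)
  have hg2 : Differentiable ℝ (deriv g) := by
    have : ContDiff ℝ ((1 : ℕ) + 1) g := by exact_mod_cast hg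
    exact (contDiff_succ_iff_deriv.mp this).2.2.differentiable (by norm_num)
  have hfe2 : ∀ y, deriv (deriv f) y = (q y - lam) * f y := fun y => by
    have := hfe y; ring_nf; ring_nf at this; linarith
  have hge2 : ∀ y, deriv (deriv g) y = (q y - mu) * g y := fun y => by
    have := hge y; ring_nf; ring_nf at this; linarith
  have hgx : g x ≠ 0 := hg0 x hx
  -- Wronskian derivative
  have hW : ∀ y : ℝ, HasDerivAt (fun z => g z * deriv f z - deriv g z * f z)
      ((mu - lam) * (g y * f y)) y := by
    intro y
    have h1 : HasDerivAt (fun z => g z * deriv f z)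
        (deriv g y * deriv f y + g y * deriv (deriv f) y) y :=
      (hg1 y).hasDerivAt.mul (hf2 y).hasDerivAt
    have h2 : HasDerivAt (fun z => deriv g z * f z)
        (deriv (deriv g) y * f y + deriv g y * deriv f y) y :=
      (hg2 y).hasDerivAt.mul (hf1 y).hasDerivAt
    have h3 := h1.sub h2
    refine h3.congr_deriv ?_
    rw [hfe2 y, hge2 y]; ring
  -- derivative of h = W / g on I
  have hD : ∀ y ∈ I, HasDerivAt (fun z => (g z * deriv f z - deriv g z * f z) / g z)
      (((mu - lam) * (g y * f y) * g y
          - (g y * deriv f y - deriv g y * f y) * deriv g y) / g y ^ 2) y :=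
    fun y hy => (hW y).div (hg1 y).hasDerivAt (hg0 y hy)
  have hev : deriv (fun z => (g z * deriv f z - deriv g z * f z) / g z)
      =ᶠ[nhds x] (fun y => ((mu - lam) * (g y * f y) * g y
          - (g y * deriv f y - deriv g y * f y) * deriv g y) / g y ^ 2) := by
    filter_upwards [hI.mem_nhds hx] with y hy
    exact (hD y hy).deriv
  -- second derivative of h at x
  have hnum : HasDerivAt (fun y => (mu - lam) * (g y * f y) * g y
      - (g y * deriv f y - deriv g y * f y) * deriv g y)
      ((mu - lam) * (deriv g x * f x + g x * deriv f x) * g x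
        + (mu - lam) * (g x * f x) * deriv g x
        - ((mu - lam) * (g x * f x) * deriv g x
            + (g x * deriv f x - deriv g x * f x) * deriv (deriv g) x)) x := by
    have hA : HasDerivAt (fun y => (mu - lam) * (g y * f y) * g y)
        ((mu - lam) * (deriv g x * f x + g x * deriv f x) * g x
          + (mu - lam) * (g x * f x) * deriv g x) x :=
      (((hg1 x).hasDerivAt.mul (hf1 x).hasDerivAt).const_mul (mu - lam)).mul
        (hg1 x).hasDerivAt
    have hB : HasDerivAt (fun y => (g y * deriv f y - deriv g y * f y) * deriv g y)
        ((mu - lam) * (g x * f x) * deriv g x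
          + (g x * deriv f x - deriv g x * f x) * deriv (deriv g) x) x :=
      (hW x).mul (hg2 x).hasDerivAt
    exact hA.sub hB
  have hden : HasDerivAt (fun y => g y ^ 2) (2 * g x ^ 1 * deriv g x) x := by
    simpa using (hg1 x).hasDerivAt.fun_pow 2
  have hDD : HasDerivAt (fun y => ((mu - lam) * (g y * f y) * g y
      - (g y * deriv f y - deriv g y * f y) * deriv g y) / g y ^ 2)
      ((((mu - lam) * (deriv g x * f x + g x * deriv f x) * g x
        + (mu - lam) * (g x * f x) * deriv g x
        - ((mu - lam) * (g x * f x) * deriv g x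
            + (g x * deriv f x - deriv g x * f x) * deriv (deriv g) x)) * g x ^ 2
        - ((mu - lam) * (g x * f x) * g x
          - (g x * deriv f x - deriv g x * f x) * deriv g x) * (2 * g x ^ 1 * deriv g x))
        / (g x ^ 2) ^ 2) x :=
    hnum.div hden (pow_ne_zero 2 hgx)
  have hsecond : deriv (deriv (fun y => (g y * deriv f y - deriv g y * f y) / g y)) x
      = (((mu - lam) * (deriv g x * f x + g x * deriv f x) * g x
        + (mu - lam) * (g x * f x) * deriv g x
        - ((mu - lam) * (g x * f x) * deriv g x
            + (g x * deriv f x - deriv g x * f x) * deriv (deriv g) x)) * g x ^ 2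
        - ((mu - lam) * (g x * f x) * g x
          - (g x * deriv f x - deriv g x * f x) * deriv g x) * (2 * g x ^ 1 * deriv g x))
        / (g x ^ 2) ^ 2 := by
    rw [hev.deriv_eq]
    exact hDD.deriv
  -- second derivative of log ∘ g at x
  have hlog : deriv (fun y => Real.log (g y)) =ᶠ[nhds x] fun y => deriv g y / g y := by
    filter_upwards [hI.mem_nhds hx] with y hy
    exact ((hg1 y).hasDerivAt.log (hg0 y hy)).deriv
  have hlog2 : deriv (deriv (fun y => Real.log (g y))) x
      = (deriv (deriv g) x * g x - deriv g x * deriv g x) / g x ^ 2 := by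
    rw [hlog.deriv_eq]
    exact ((hg2 x).hasDerivAt.div (hg1 x).hasDerivAt hgx).deriv
  rw [hsecond, hlog2, hge2 x]
  field_simp
  ring
end

section
/- In the case λ = μ of Darboux's lemma: if g satisfies -g'' + q·g = μ·g and g ≠ 0 on an interval I, then for any constants a, b ∈ ℝ, the function u(x) = (1/g(x))·(a + b·∫₀ˣ g(s)² ds) satisfies -u'' + (q - 2(log g)'')·u = μ·u on I. -/
/-- Darboux's lemma, equal eigenvalue case: if `-g'' + q g = μ g` and `g ≠ 0` on an open
interval `I` containing `0`, then for any `a b : ℝ` the function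
`u x = (1/g x) * (a + b * ∫₀ˣ g(s)² ds)` satisfies `-u'' + (q - 2 (log g)'') u = μ u` on `I`. -/
theorem darboux_lemma_equal_eigenvalue (q g : ℝ → ℝ) (mu : ℝ) (I : Set ℝ) (hI : IsOpen I)
    (hI0 : (0 : ℝ) ∈ I)
    (hq : Continuous q) (hg : ContDiff ℝ 2 g)
    (hge : ∀ x, -(deriv (deriv g) x) + q x * g x = mu * g x)
    (hg0 : ∀ x ∈ I, g x ≠ 0) (a b : ℝ) :
    ∀ x ∈ I,
      -(deriv (deriv (fun y => (1 / g y) * (a + b * ∫ s in (0:ℝ)..y, (g s) ^ 2))) x)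
        + (q x - 2 * deriv (deriv (fun y => Real.log (g y))) x)
          * ((1 / g x) * (a + b * ∫ s in (0:ℝ)..x, (g s) ^ 2))
      = mu * ((1 / g x) * (a + b * ∫ s in (0:ℝ)..x, (g s) ^ 2)) := by
  have hgc : Continuous g := hg.continuous
  have hg1 : Differentiable ℝ g := hg.differentiable (by norm_num)
  have hg2' : ContDiff ℝ 1 (deriv g) := by
    have := (contDiff_succ_iff_deriv (n := 1)).mp (by norm_num at hg ⊢; exact hg)
    exact this.2.2
  have hdg : Differentiable ℝ (deriv g) := hg2'.differentiable (by norm_num)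
  set F : ℝ → ℝ := fun t => ∫ s in (0:ℝ)..t, (g s) ^ 2 with hFdef
  have hF : ∀ y : ℝ, HasDerivAt F ((g y) ^ 2) y := by
    intro y
    exact intervalIntegral.integral_hasDerivAt_right
      ((hgc.pow 2).intervalIntegrable _ _)
      ((hgc.pow 2).stronglyMeasurableAtFilter _ _)
      (hgc.pow 2).continuousAt
  intro x hx
  have hgx : g x ≠ 0 := hg0 x hx
  have hV : ∀ᶠ y in nhds x, g y ≠ 0 := hgc.continuousAt.eventually_ne hgx
  -- first derivative of u
  set u' : ℝ → ℝ := fun y => -(deriv g y) / (g y) ^ 2 * (a + b * F y) + b * g y with hu'def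
  have key : ∀ y : ℝ, g y ≠ 0 →
      HasDerivAt (fun y => (1 / g y) * (a + b * F y)) (u' y) y := by
    intro y hy
    have h1 : HasDerivAt (fun y => (g y)⁻¹) (-(deriv g y) / (g y) ^ 2) y :=
      ((hg1 y).hasDerivAt).inv hy
    have h2 : HasDerivAt (fun y => a + b * F y) (b * ((g y) ^ 2)) y :=
      ((hF y).const_mul b).const_add a
    have := h1.mul h2
    have h3 : (g y)⁻¹ * (b * g y ^ 2) = b * g y := by
      field_simp
    rw [h3] at this
    simp only [one_div]
    exact this
  have hderiv_u : deriv (fun y => (1 / g y) * (a + b * F y)) =ᶠ[nhds x] u' :=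
    hV.mono fun y hy => (key y hy).deriv
  -- second derivative of u at x
  have hA : HasDerivAt (fun y => -(deriv g y) / (g y) ^ 2)
      ((-(deriv (deriv g) x) * (g x) ^ 2 - (-(deriv g x)) * (2 * (g x) ^ 1 * deriv g x))
        / ((g x) ^ 2) ^ 2) x := by
    exact HasDerivAt.div ((hdg x).hasDerivAt).neg (((hg1 x).hasDerivAt).pow 2)
      (pow_ne_zero 2 hgx)
  have hB : HasDerivAt (fun y => a + b * F y) (b * ((g x) ^ 2)) x :=
    ((hF x).const_mul b).const_add a
  have hu'' : HasDerivAt u'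
      (((-(deriv (deriv g) x) * (g x) ^ 2 - (-(deriv g x)) * (2 * (g x) ^ 1 * deriv g x))
        / ((g x) ^ 2) ^ 2) * (a + b * F x)
        + (-(deriv g x) / (g x) ^ 2) * (b * ((g x) ^ 2))
        + b * deriv g x) x := by
    exact (hA.mul hB).add ((hg1 x).hasDerivAt.const_mul b)
  have huu : deriv (deriv (fun y => (1 / g y) * (a + b * F y))) x
      = ((-(deriv (deriv g) x) * (g x) ^ 2 - (-(deriv g x)) * (2 * (g x) ^ 1 * deriv g x))
        / ((g x) ^ 2) ^ 2) * (a + b * F x)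
        + (-(deriv g x) / (g x) ^ 2) * (b * ((g x) ^ 2))
        + b * deriv g x := by
    rw [hderiv_u.deriv_eq]
    exact hu''.deriv
  -- (log g)'' at x
  have keyL : ∀ y : ℝ, g y ≠ 0 →
      HasDerivAt (fun y => Real.log (g y)) (deriv g y / g y) y := by
    intro y hy
    have := (Real.hasDerivAt_log hy).comp y ((hg1 y).hasDerivAt)
    rw [div_eq_inv_mul]
    exact this
  have hderiv_L : deriv (fun y => Real.log (g y)) =ᶠ[nhds x] fun y => deriv g y / g y :=
    hV.mono fun y hy => (keyL y hy).deriv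
  have hLd : HasDerivAt (fun y => deriv g y / g y)
      ((deriv (deriv g) x * g x - deriv g x * deriv g x) / (g x) ^ 2) x :=
    HasDerivAt.div ((hdg x).hasDerivAt) ((hg1 x).hasDerivAt) hgx
  have hLL : deriv (deriv (fun y => Real.log (g y))) x
      = (deriv (deriv g) x * g x - deriv g x * deriv g x) / (g x) ^ 2 := by
    rw [hderiv_L.deriv_eq]
    exact hLd.deriv
  -- finish algebraically
  have hge' : deriv (deriv g) x = (q x - mu) * g x := by
    have := hge x; linarith
  rw [huu, hLL, hge']
  field_simp
  ring
end

section
/- Double Darboux transformation: let f, g, h satisfy -f'' + q f = λ f, -g'' + q g = μ g, and -h'' + (q - 2(log g)'')·h = ν h, with λ ∉ {μ, ν}, and g, h nonvanishing on an interval I. Then the function u = (μ - λ)·f - (W[g,f]/g)·(log(g·h))' satisfies -u'' + (q - 2(log(g·h))'')·u = λ·u on I. -/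
set_option maxHeartbeats 2000000


/-- Double Darboux transformation: if `-f'' + q f = λ f`, `-g'' + q g = μ g`,
`-h'' + (q - 2(log g)'') h = ν h`, with `λ ∉ {μ, ν}` and `g, h` nonvanishing on an open
interval `I`, then `u = (μ - λ) f - (W[g,f]/g) (log (g h))'` satisfies
`-u'' + (q - 2 (log (g h))'') u = λ u` on `I`. -/
theorem double_darboux (q f g h : ℝ → ℝ) (lam mu nu : ℝ) (I : Set ℝ) (hI : IsOpen I)
    (hq : Continuous q) (hf : ContDiff ℝ 2 f) (hg : ContDiff ℝ 2 g) (hh : ContDiff ℝ 2 h)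
    (hlm : lam ≠ mu) (hln : lam ≠ nu)
    (hfe : ∀ x, -(deriv (deriv f) x) + q x * f x = lam * f x)
    (hge : ∀ x, -(deriv (deriv g) x) + q x * g x = mu * g x)
    (hhe : ∀ x ∈ I, -(deriv (deriv h) x)
        + (q x - 2 * deriv (deriv (fun y => Real.log (g y))) x) * h x = nu * h x)
    (hg0 : ∀ x ∈ I, g x ≠ 0) (hh0 : ∀ x ∈ I, h x ≠ 0) :
    ∀ x ∈ I,
      -(deriv (deriv (fun y => (mu - lam) * f y
          - ((g y * deriv f y - deriv g y * f y) / g y)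
            * deriv (fun z => Real.log (g z * h z)) y)) x)
        + (q x - 2 * deriv (deriv (fun y => Real.log (g y * h y))) x)
          * ((mu - lam) * f x
            - ((g x * deriv f x - deriv g x * f x) / g x)
              * deriv (fun z => Real.log (g z * h z)) x)
      = lam * ((mu - lam) * f x
          - ((g x * deriv f x - deriv g x * f x) / g x)
            * deriv (fun z => Real.log (g z * h z)) x) := by
  -- basic differentiability
  have h2 : (2 : WithTop ℕ∞) = 1 + 1 := by norm_num
  have hfd : Differentiable ℝ f := hf.differentiable two_ne_zero
  have hgd : Differentiable ℝ g := hg.differentiable two_ne_zero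
  have hhd : Differentiable ℝ h := hh.differentiable two_ne_zero
  have hf1 : Differentiable ℝ (deriv f) :=
    ((contDiff_succ_iff_deriv.mp (h2 ▸ hf)).2.2).differentiable one_ne_zero
  have hg1 : Differentiable ℝ (deriv g) :=
    ((contDiff_succ_iff_deriv.mp (h2 ▸ hg)).2.2).differentiable one_ne_zero
  have hh1 : Differentiable ℝ (deriv h) :=
    ((contDiff_succ_iff_deriv.mp (h2 ▸ hh)).2.2).differentiable one_ne_zero
  have Hf : ∀ y, HasDerivAt f (deriv f y) y := fun y => (hfd y).hasDerivAt
  have Hg : ∀ y, HasDerivAt g (deriv g y) y := fun y => (hgd y).hasDerivAt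
  have Hh : ∀ y, HasDerivAt h (deriv h y) y := fun y => (hhd y).hasDerivAt
  have Hf' : ∀ y, HasDerivAt (deriv f) (deriv (deriv f) y) y := fun y => (hf1 y).hasDerivAt
  have Hg' : ∀ y, HasDerivAt (deriv g) (deriv (deriv g) y) y := fun y => (hg1 y).hasDerivAt
  have Hh' : ∀ y, HasDerivAt (deriv h) (deriv (deriv h) y) y := fun y => (hh1 y).hasDerivAt
  -- ODE rewrites
  have hf2 : ∀ y, deriv (deriv f) y = (q y - lam) * f y := fun y => by
    linear_combination -hfe y
  have hg2 : ∀ y, deriv (deriv g) y = (q y - mu) * g y := fun y => by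
    linear_combination -hge y
  have Hf2 : ∀ y, HasDerivAt (deriv f) ((q y - lam) * f y) y := fun y => hf2 y ▸ Hf' y
  have Hg2 : ∀ y, HasDerivAt (deriv g) ((q y - mu) * g y) y := fun y => hg2 y ▸ Hg' y
  -- first derivative of log g on I
  have Hlg : ∀ y ∈ I, deriv (fun z => Real.log (g z)) y = deriv g y / g y := fun y hy =>
    ((Hg y).log (hg0 y hy)).deriv
  -- second derivative of log g on I
  have Hlg2 : ∀ y ∈ I, deriv (deriv (fun z => Real.log (g z))) y
      = (q y - mu) - (deriv g y / g y) ^ 2 := by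
    intro y hy
    have hev : deriv (fun z => Real.log (g z)) =ᶠ[nhds y] (fun z => deriv g z / g z) :=
      Filter.eventuallyEq_of_mem (hI.mem_nhds hy) (fun z hz => Hlg z hz)
    rw [hev.deriv_eq, (show HasDerivAt (fun z => deriv g z / g z) _ y from
      (Hg2 y).div (Hg y) (hg0 y hy)).deriv]
    field_simp [hg0 y hy]
  -- h'' on I
  have hh2 : ∀ y ∈ I, deriv (deriv h) y
      = (q y - 2 * ((q y - mu) - (deriv g y / g y) ^ 2) - nu) * h y := by
    intro y hy
    have he := hhe y hy
    rw [show (fun y => Real.log (g y)) = (fun z => Real.log (g z)) from rfl, Hlg2 y hy] at he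
    linear_combination -he
  have Hh2 : ∀ y ∈ I, HasDerivAt (deriv h)
      ((q y - 2 * ((q y - mu) - (deriv g y / g y) ^ 2) - nu) * h y) y :=
    fun y hy => hh2 y hy ▸ Hh' y
  -- first derivative of log (g h) on I
  have Hlgh : ∀ y ∈ I, deriv (fun z => Real.log (g z * h z)) y
      = deriv g y / g y + deriv h y / h y := by
    intro y hy
    have hd : HasDerivAt (fun z => g z * h z) (deriv g y * h y + g y * deriv h y) y :=
      (Hg y).mul (Hh y)
    rw [(hd.log (mul_ne_zero (hg0 y hy) (hh0 y hy))).deriv]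
    field_simp [hg0 y hy, hh0 y hy]
  -- derivative of L = g'/g + h'/h on I
  have HL : ∀ y ∈ I, HasDerivAt (fun z => deriv g z / g z + deriv h z / h z)
      (mu - nu + (deriv g y / g y) ^ 2 - (deriv h y / h y) ^ 2) y := by
    intro y hy
    have hd : HasDerivAt (fun z => deriv g z / g z + deriv h z / h z) _ y :=
      ((Hg2 y).div (Hg y) (hg0 y hy)).add ((Hh2 y hy).div (Hh y) (hh0 y hy))
    convert hd using 1
    field_simp [hg0 y hy, hh0 y hy]
    ring
  -- second derivative of log (g h) on I
  have Hlgh2 : ∀ y ∈ I, deriv (deriv (fun z => Real.log (g z * h z))) y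
      = mu - nu + (deriv g y / g y) ^ 2 - (deriv h y / h y) ^ 2 := by
    intro y hy
    have hev : deriv (fun z => Real.log (g z * h z))
        =ᶠ[nhds y] (fun z => deriv g z / g z + deriv h z / h z) :=
      Filter.eventuallyEq_of_mem (hI.mem_nhds hy) (fun z hz => Hlgh z hz)
    rw [hev.deriv_eq, (HL y hy).deriv]
  -- the Wronskian and its derivative
  have Hw : ∀ y, HasDerivAt (fun z => g z * deriv f z - deriv g z * f z)
      ((mu - lam) * (g y * f y)) y := by
    intro y
    have hd : HasDerivAt (fun z => g z * deriv f z - deriv g z * f z) _ y :=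
      ((Hg y).mul (Hf2 y)).sub ((Hg2 y).mul (Hf y))
    convert hd using 1
    ring
  -- u agrees with F1 on I
  have hu1 : Set.EqOn (fun y => (mu - lam) * f y
      - ((g y * deriv f y - deriv g y * f y) / g y)
        * deriv (fun z => Real.log (g z * h z)) y)
      (fun y => (mu - lam) * f y - ((g y * deriv f y - deriv g y * f y) / g y)
        * (deriv g y / g y + deriv h y / h y)) I := by
    intro y hy
    simp only [Hlgh y hy]
  -- F1 has derivative F2 on I
  have HF1 : ∀ y ∈ I, HasDerivAt (fun y => (mu - lam) * f y
      - ((g y * deriv f y - deriv g y * f y) / g y)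
        * (deriv g y / g y + deriv h y / h y))
      ((mu - lam) * deriv f y
        - ((((mu - lam) * (g y * f y)) * g y
              - (g y * deriv f y - deriv g y * f y) * deriv g y) / g y ^ 2
            * (deriv g y / g y + deriv h y / h y)
          + ((g y * deriv f y - deriv g y * f y) / g y)
            * (mu - nu + (deriv g y / g y) ^ 2 - (deriv h y / h y) ^ 2))) y := by
    intro y hy
    exact ((Hf y).const_mul (mu - lam)).sub
      ((((Hw y).div (Hg y) (hg0 y hy)).mul (HL y hy)))
  -- deriv u = F2 on I
  have hdu : Set.EqOn (deriv (fun y => (mu - lam) * f y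
      - ((g y * deriv f y - deriv g y * f y) / g y)
        * deriv (fun z => Real.log (g z * h z)) y))
      (fun y => (mu - lam) * deriv f y
        - ((((mu - lam) * (g y * f y)) * g y
              - (g y * deriv f y - deriv g y * f y) * deriv g y) / g y ^ 2
            * (deriv g y / g y + deriv h y / h y)
          + ((g y * deriv f y - deriv g y * f y) / g y)
            * (mu - nu + (deriv g y / g y) ^ 2 - (deriv h y / h y) ^ 2))) I := by
    intro y hy
    have hev := Filter.eventuallyEq_of_mem (hI.mem_nhds hy) hu1
    rw [hev.deriv_eq, (HF1 y hy).deriv]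
  intro x hx
  have hgx := hg0 x hx
  have hhx := hh0 x hx
  have hN := ((((Hg x).mul (Hf x)).const_mul (mu - lam)).mul (Hg x)).sub
    ((Hw x).mul (Hg2 x))
  have hgsq := (Hg x).pow (n := 2)
  have hLp := ((hasDerivAt_const x (mu - nu)).add
    (((Hg2 x).div (Hg x) hgx).pow (n := 2))).sub
    (((Hh2 x hx).div (Hh x) hhx).pow (n := 2))
  have HF2 := ((Hf2 x).const_mul (mu - lam)).sub
    (((hN.div hgsq (pow_ne_zero 2 hgx)).mul (HL x hx)).add
      (((Hw x).div (Hg x) hgx).mul hLp))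
  have hkey : deriv (fun y => (mu - lam) * deriv f y
      - ((((mu - lam) * (g y * f y)) * g y
            - (g y * deriv f y - deriv g y * f y) * deriv g y) / g y ^ 2
          * (deriv g y / g y + deriv h y / h y)
        + ((g y * deriv f y - deriv g y * f y) / g y)
          * (mu - nu + (deriv g y / g y) ^ 2 - (deriv h y / h y) ^ 2))) x = _ := HF2.deriv
  have hev2 := Filter.eventuallyEq_of_mem (hI.mem_nhds hx) hdu
  rw [hev2.deriv_eq, hkey, Hlgh x hx, Hlgh2 x hx]
  simp only [Pi.mul_apply, Pi.sub_apply, Pi.div_apply, Pi.add_apply, Pi.pow_apply,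
    Nat.cast_ofNat, Nat.reduceSub, pow_one]
  field_simp [hgx, hhx]
  ring
end

section
/- Double Darboux transformation, equal eigenvalue case: if g satisfies -g'' + q g = μ g, g ≠ 0 on I, and h satisfies -h'' + (q - 2(log g)'')·h = ν h with h ≠ 0 on I, then u = 1/h satisfies -u'' + (q - 2(log(g·h))'')·u = ν·u on I. -/
private lemma deriv_deriv_log_aux (f : ℝ → ℝ) (hf : ContDiff ℝ 2 f) (s : Set ℝ)
    (hso : IsOpen s) (hne : ∀ y ∈ s, f y ≠ 0) {x : ℝ} (hx : x ∈ s) :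
    deriv (deriv (fun y => Real.log (f y))) x
      = (deriv (deriv f) x * f x - deriv f x ^ 2) / f x ^ 2 := by
  have hfd : Differentiable ℝ f := hf.differentiable two_ne_zero
  have hfd' : Differentiable ℝ (deriv f) := by
    have : ContDiff ℝ (1 + 1) f := by norm_num; exact hf
    exact ((contDiff_succ_iff_deriv.mp this).2.2).differentiable one_ne_zero
  have h1 : deriv (fun y => Real.log (f y)) =ᶠ[nhds x] fun y => deriv f y / f y := by
    filter_upwards [hso.mem_nhds hx] with y hy
    exact ((hfd y).hasDerivAt.log (hne y hy)).deriv
  rw [h1.deriv_eq]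
  have : deriv (fun y => deriv f y / f y) x = _ := (((hfd' x).hasDerivAt).div ((hfd x).hasDerivAt) (hne x hx)).deriv
  rw [this]; ring

private lemma deriv_deriv_inv_aux (f : ℝ → ℝ) (hf : ContDiff ℝ 2 f) (s : Set ℝ)
    (hso : IsOpen s) (hne : ∀ y ∈ s, f y ≠ 0) {x : ℝ} (hx : x ∈ s) :
    deriv (deriv (fun y => 1 / f y)) x
      = (2 * deriv f x ^ 2 - f x * deriv (deriv f) x) / f x ^ 3 := by
  have hfd : Differentiable ℝ f := hf.differentiable two_ne_zero
  have hfd' : Differentiable ℝ (deriv f) := by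
    have : ContDiff ℝ (1 + 1) f := by norm_num; exact hf
    exact ((contDiff_succ_iff_deriv.mp this).2.2).differentiable one_ne_zero
  have h1 : deriv (fun y => 1 / f y) =ᶠ[nhds x]
      fun y => -(deriv f y) / f y ^ 2 := by
    filter_upwards [hso.mem_nhds hx] with y hy
    have : deriv (fun y => 1 / f y) y = _ := ((hasDerivAt_const y (1:ℝ)).div ((hfd y).hasDerivAt) (hne y hy)).deriv
    rw [this]; ring
  rw [h1.deriv_eq]
  have hsq : (fun y => f y ^ 2) = fun y => f y * f y := by funext y; ring
  have hd2 : HasDerivAt (fun y => f y ^ 2) (2 * f x * deriv f x) x := by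
    have := ((hfd x).hasDerivAt).mul ((hfd x).hasDerivAt)
    rw [hsq]; exact this.congr_deriv (by ring)
  have : deriv (fun y => -deriv f y / f y ^ 2) x = _ := (((hfd' x).hasDerivAt).neg.div hd2 (pow_ne_zero 2 (hne x hx))).deriv
  rw [this, Pi.neg_apply, div_eq_div_iff (pow_ne_zero 2 (pow_ne_zero 2 (hne x hx))) (pow_ne_zero 3 (hne x hx))]
  ring

private lemma deriv_deriv_log_mul_aux (g h : ℝ → ℝ) (hg : ContDiff ℝ 2 g) (hh : ContDiff ℝ 2 h)
    (s : Set ℝ) (hso : IsOpen s) (hgne : ∀ y ∈ s, g y ≠ 0) (hhne : ∀ y ∈ s, h y ≠ 0)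
    {x : ℝ} (hx : x ∈ s) :
    deriv (deriv (fun y => Real.log (g y * h y))) x
      = deriv (deriv (fun y => Real.log (g y))) x + deriv (deriv (fun y => Real.log (h y))) x := by
  have hgd : Differentiable ℝ g := hg.differentiable two_ne_zero
  have hhd : Differentiable ℝ h := hh.differentiable two_ne_zero
  have h2 : deriv (fun y => Real.log (g y * h y)) =ᶠ[nhds x]
      fun y => deriv (fun z => Real.log (g z)) y + deriv (fun z => Real.log (h z)) y := by
    filter_upwards [hso.mem_nhds hx] with y hy
    have e : (fun z => Real.log (g z * h z)) =ᶠ[nhds y]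
        fun z => Real.log (g z) + Real.log (h z) := by
      filter_upwards [hso.mem_nhds hy] with z hz
      exact Real.log_mul (hgne z hz) (hhne z hz)
    rw [e.deriv_eq]; exact deriv_add
      (((hgd y).hasDerivAt.log (hgne y hy)).differentiableAt)
      (((hhd y).hasDerivAt.log (hhne y hy)).differentiableAt)
  rw [h2.deriv_eq]
  have dlg : DifferentiableAt ℝ (deriv (fun z => Real.log (g z))) x := by
    have h1 : deriv (fun y => Real.log (g y)) =ᶠ[nhds x] fun y => deriv g y / g y := by
      filter_upwards [hso.mem_nhds hx] with y hy
      exact ((hgd y).hasDerivAt.log (hgne y hy)).deriv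
    have hfd' : Differentiable ℝ (deriv g) := by
      have : ContDiff ℝ (1 + 1) g := by norm_num; exact hg
      exact ((contDiff_succ_iff_deriv.mp this).2.2).differentiable one_ne_zero
    exact (((hfd' x).div (hgd x) (hgne x hx))).congr_of_eventuallyEq h1
  have dlh : DifferentiableAt ℝ (deriv (fun z => Real.log (h z))) x := by
    have h1 : deriv (fun y => Real.log (h y)) =ᶠ[nhds x] fun y => deriv h y / h y := by
      filter_upwards [hso.mem_nhds hx] with y hy
      exact ((hhd y).hasDerivAt.log (hhne y hy)).deriv
    have hfd' : Differentiable ℝ (deriv h) := by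
      have : ContDiff ℝ (1 + 1) h := by norm_num; exact hh
      exact ((contDiff_succ_iff_deriv.mp this).2.2).differentiable one_ne_zero
    exact (((hfd' x).div (hhd x) (hhne x hx))).congr_of_eventuallyEq h1
  exact deriv_add dlg dlh

/-- Double Darboux transformation, equal eigenvalue case: if `-g'' + q g = μ g`, `g ≠ 0` on `I`,
and `-h'' + (q - 2(log g)'') h = ν h` with `h ≠ 0` on `I`, then `u = 1/h` satisfies
`-u'' + (q - 2 (log (g h))'') u = ν u` on `I`. -/
theorem double_darboux_equal_eigenvalue (q g h : ℝ → ℝ) (mu nu : ℝ) (I : Set ℝ) (hI : IsOpen I)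
    (hq : Continuous q) (hg : ContDiff ℝ 2 g) (hh : ContDiff ℝ 2 h)
    (hge : ∀ x, -(deriv (deriv g) x) + q x * g x = mu * g x)
    (hhe : ∀ x ∈ I, -(deriv (deriv h) x)
        + (q x - 2 * deriv (deriv (fun y => Real.log (g y))) x) * h x = nu * h x)
    (hg0 : ∀ x ∈ I, g x ≠ 0) (hh0 : ∀ x ∈ I, h x ≠ 0) :
    ∀ x ∈ I,
      -(deriv (deriv (fun y => 1 / h y)) x)
        + (q x - 2 * deriv (deriv (fun y => Real.log (g y * h y))) x) * (1 / h x)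
      = nu * (1 / h x) := by
  intro x hx
  set s : Set ℝ := I ∩ {y | g y ≠ 0} ∩ {y | h y ≠ 0} with hs
  have hso : IsOpen s := ((hI.inter
      (isOpen_compl_singleton.preimage hg.continuous)).inter
      (isOpen_compl_singleton.preimage hh.continuous))
  have hxs : x ∈ s := ⟨⟨hx, hg0 x hx⟩, hh0 x hx⟩
  have hgne : ∀ y ∈ s, g y ≠ 0 := fun y hy => hy.1.2
  have hhne : ∀ y ∈ s, h y ≠ 0 := fun y hy => hy.2
  rw [deriv_deriv_inv_aux h hh s hso hhne hxs,
      deriv_deriv_log_mul_aux g h hg hh s hso hgne hhne hxs,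
      deriv_deriv_log_aux h hh s hso hhne hxs]
  have key := hhe x hx
  have hh0x : h x ≠ 0 := hh0 x hx
  set A := deriv (deriv (fun y => Real.log (g y))) x
  set H := h x
  set H' := deriv h x
  set H'' := deriv (deriv h) x
  field_simp
  linear_combination H * key
end

section
/- Eigenvalue formula from W[h, W[g,f]/g]: under the hypotheses of the double Darboux lemma, the identity (1/h)·W[h, (1/g)·W[g,f]] = (μ − λ)·f − (W[g,f]/g)·(d/dx)[log(g·h)] holds pointwise on the interval where g, h are nonvanishing. -/
/-- Eigenfunction formula from the double Darboux transformation: under the hypotheses of the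
double Darboux lemma, `(1/h) W[h, (1/g) W[g,f]] = (μ − λ) f − (W[g,f]/g) (log (g h))'`
pointwise on the interval where `g` and `h` are nonvanishing. -/
theorem wronskian_double_darboux_identity (q f g h : ℝ → ℝ) (lam mu nu : ℝ) (I : Set ℝ)
    (hI : IsOpen I) (hq : Continuous q)
    (hf : ContDiff ℝ 2 f) (hg : ContDiff ℝ 2 g) (hh : ContDiff ℝ 2 h)
    (hlm : lam ≠ mu) (hln : lam ≠ nu)
    (hfe : ∀ x, -(deriv (deriv f) x) + q x * f x = lam * f x)
    (hge : ∀ x, -(deriv (deriv g) x) + q x * g x = mu * g x)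
    (hhe : ∀ x ∈ I, -(deriv (deriv h) x)
        + (q x - 2 * deriv (deriv (fun y => Real.log (g y))) x) * h x = nu * h x)
    (hg0 : ∀ x ∈ I, g x ≠ 0) (hh0 : ∀ x ∈ I, h x ≠ 0) :
    ∀ x ∈ I,
      (1 / h x) *
        (h x * deriv (fun y => (1 / g y) * (g y * deriv f y - deriv g y * f y)) x
          - deriv h x * ((1 / g x) * (g x * deriv f x - deriv g x * f x)))
      = (mu - lam) * f x
        - ((g x * deriv f x - deriv g x * f x) / g x)
          * deriv (fun y => Real.log (g y * h y)) x := by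
  intro x hx
  have hgx := hg0 x hx
  have hhx := hh0 x hx
  have hf2 : ContDiff ℝ (1 + 1) f := by exact_mod_cast hf
  have hg2 : ContDiff ℝ (1 + 1) g := by exact_mod_cast hg
  have hfd : HasDerivAt f (deriv f x) x :=
    ((hf.differentiable (by norm_num)) x).hasDerivAt
  have hgd : HasDerivAt g (deriv g x) x :=
    ((hg.differentiable (by norm_num)) x).hasDerivAt
  have hhd : HasDerivAt h (deriv h x) x :=
    ((hh.differentiable (by norm_num)) x).hasDerivAt
  have hfd' : HasDerivAt (deriv f) (deriv (deriv f) x) x :=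
    (((contDiff_succ_iff_deriv.mp hf2).2.2.differentiable one_ne_zero) x).hasDerivAt
  have hgd' : HasDerivAt (deriv g) (deriv (deriv g) x) x :=
    (((contDiff_succ_iff_deriv.mp hg2).2.2.differentiable one_ne_zero) x).hasDerivAt
  -- derivative of the Wronskian W = g f' - g' f
  have hW : HasDerivAt (fun y => g y * deriv f y - deriv g y * f y)
      (deriv g x * deriv f x + g x * deriv (deriv f) x
        - (deriv (deriv g) x * f x + deriv g x * deriv f x)) x :=
    (hgd.mul hfd').sub (hgd'.mul hfd)
  -- derivative of 1/g
  have hinv : HasDerivAt (fun y => 1 / g y)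
      ((0 * g x - 1 * deriv g x) / (g x) ^ 2) x :=
    (hasDerivAt_const x (1:ℝ)).div hgd hgx
  have hprod := hinv.mul hW
  have hd1 : deriv (fun y => (1 / g y) * (g y * deriv f y - deriv g y * f y)) x
      = (0 * g x - 1 * deriv g x) / (g x) ^ 2 * (g x * deriv f x - deriv g x * f x)
        + 1 / g x * (deriv g x * deriv f x + g x * deriv (deriv f) x
          - (deriv (deriv g) x * f x + deriv g x * deriv f x)) := hprod.deriv
  -- derivative of log (g h)
  have hlog : HasDerivAt (fun y => Real.log (g y * h y))
      ((g x * h x)⁻¹ * (deriv g x * h x + g x * deriv h x)) x :=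
    by have h1 : HasDerivAt (fun y => g y * h y) _ x := hgd.mul hhd; exact (Real.hasDerivAt_log (mul_ne_zero hgx hhx)).comp x h1
  have hd2 : deriv (fun y => Real.log (g y * h y)) x
      = (g x * h x)⁻¹ * (deriv g x * h x + g x * deriv h x) := hlog.deriv
  have hf'' : deriv (deriv f) x = q x * f x - lam * f x := by linarith [hfe x]
  have hg'' : deriv (deriv g) x = q x * g x - mu * g x := by linarith [hge x]
  rw [hd1, hd2, hf'', hg'']
  field_simp
  ring
end
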